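/- Let u, v, x, y be points in the plane with u ≠ v, x ≠ y, such that x lies in the side region of {u,v} adjacent to v and y lies in one of the center regions of {u,v} (i.e., y is in neither side region of {u,v}). If u lies in the side region of {x,y} adjacent to x, then v also lies in the side region of {x,y} adjacent to x. -/

import Mathlib

open Real

section Aux2

local notation "E2" => EuclideanSpace ℝ (Fin 2)

lemma claim23_inner2 (a b : E2) : (inner ℝ a b : ℝ) = a 0 * b 0 + a 1 * b 1 := by
  simp [PiLp.inner_apply, RCLike.inner_apply, Fin.sum_univ_two, mul_comm]

lemma claim23_normsq (a : E2) : ‖a‖ ^ 2 = a 0 ^ 2 + a 1 ^ 2 := by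
  have h := real_inner_self_eq_norm_mul_norm a
  rw [claim23_inner2] at h
  nlinarith [h]

lemma claim23_pos (a : E2) (ha : a ≠ 0) : 0 < a 0 ^ 2 + a 1 ^ 2 := by
  have h := claim23_normsq a
  have h2 : 0 < ‖a‖ := norm_pos_iff.mpr ha
  nlinarith

lemma claim23_abs_le (s A cr : ℝ) (hs : 0 < s) (hs2 : s ^ 2 = 3) (hA : 0 ≤ A)
    (h : cr ^ 2 ≤ 3 * A ^ 2) : cr ≤ s * A ∧ -(s * A) ≤ cr := by
  have hsA : 0 ≤ s * A := mul_nonneg hs.le hA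
  constructor <;> nlinarith [sq_nonneg (s * A - cr), sq_nonneg (s * A + cr)]

lemma claim23_case (s t cVD N : ℝ) (hs : 0 < s) (hs2 : s ^ 2 = 3) (hN : 2 * t < N)
    (hNsq : N ^ 2 = t ^ 2 + cVD ^ 2) : s * t < cVD ∨ s * t < -cVD := by
  rcases lt_or_ge t 0 with ht | ht
  · rcases le_or_gt cVD 0 with hcv | hcv
    · right
      have := mul_neg_of_pos_of_neg hs ht
      linarith
    · left
      have := mul_neg_of_pos_of_neg hs ht
      linarith
  · have hNpos : 0 < N := by linarith
    have h4t : 4 * t ^ 2 < t ^ 2 + cVD ^ 2 := by nlinarith [hN, ht, hNpos]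
    rcases le_or_gt cVD 0 with hcv | hcv
    · right
      nlinarith [mul_nonneg hs.le ht]
    · left
      nlinarith [mul_nonneg hs.le ht]

end Aux2

lemma claim23_linsolve (s A Q c X Y : ℝ)
    (hs : 0 < s) (hQ : 0 < Q) (hA : 0 ≤ A)
    (h3a : c * (Y - 2 * X) ≤ s * ((A + Q) * Y))
    (h3b : c * (2 * Y - X) ≤ s * ((A + Q) * X))
    (hcase : s * (A * Y) < c * (Y - 2 * X) ∨ s * (A * X) < c * (2 * Y - X)) :
    0 ≤ X ∧ 0 ≤ Y := by
  have hAQ : 0 < A + Q := by linarith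
  rcases hcase with h4 | h4
  · have hY0 : 0 < Y := by nlinarith [mul_pos hs hQ]
    refine ⟨?_, hY0.le⟩
    by_contra hX0
    push_neg at hX0
    have hsx : s * ((A + Q) * X) < 0 := mul_neg_of_pos_of_neg hs (mul_neg_of_pos_of_neg hAQ hX0)
    have hcX : c * (2 * Y - X) < 0 := lt_of_le_of_lt h3b hsx
    have h1 : 0 < 2 * Y - X := by linarith
    have hcneg : c < 0 := by
      by_contra hc
      push_neg at hc
      exact absurd (mul_nonneg hc h1.le) (not_le.mpr hcX)
    have h2 : 0 < Y - 2 * X := by linarith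
    have h3 : c * (Y - 2 * X) < 0 := mul_neg_of_neg_of_pos hcneg h2
    have h5 : 0 ≤ s * (A * Y) := mul_nonneg hs.le (mul_nonneg hA hY0.le)
    linarith
  · have hX0 : 0 < X := by nlinarith [mul_pos hs hQ]
    refine ⟨hX0.le, ?_⟩
    by_contra hY0
    push_neg at hY0
    have hsy : s * ((A + Q) * Y) < 0 := mul_neg_of_pos_of_neg hs (mul_neg_of_pos_of_neg hAQ hY0)
    have hcY : c * (Y - 2 * X) < 0 := lt_of_le_of_lt h3a hsy
    have h1 : Y - 2 * X < 0 := by linarith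
    have hcpos : 0 < c := by
      by_contra hc
      push_neg at hc
      nlinarith [mul_nonneg (neg_nonneg.mpr hc) (neg_nonneg.mpr h1.le)]
    have h2 : 2 * Y - X < 0 := by linarith
    have h3 : c * (2 * Y - X) < 0 := mul_neg_of_pos_of_neg hcpos h2
    have h5 : 0 ≤ s * (A * X) := mul_nonneg hs.le (mul_nonneg hA hX0.le)
    linarith

lemma claim23_crux (s A c Q DB DxB T cGD t cVD : ℝ)
    (hs : 0 < s) (hs2 : s ^ 2 = 3) (hQ : 0 < Q) (hA : 0 ≤ A)
    (hc1 : c ≤ s * A) (hc2 : -(s * A) ≤ c)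
    (hT1 : cGD ≤ s * T) (hT2 : -(s * T) ≤ cGD)
    (e1 : Q * T = -((A + Q) * DB) + c * DxB)
    (e2 : Q * cGD = (A + Q) * DxB + c * DB)
    (e3 : Q * t = -(A * DB) + c * DxB)
    (e4 : Q * cVD = A * DxB + c * DB)
    (hcase : s * t < cVD ∨ s * t < -cVD) :
    DxB ≤ -(s * DB) ∧ s * DB ≤ DxB := by
  have h3a : c * ((-(s * DB) - DxB) - 2 * (-(s * DB) + DxB)) ≤
      s * ((A + Q) * (-(s * DB) - DxB)) := by
    have hf : 0 ≤ s * (Q * (s * T - cGD)) :=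
      mul_nonneg hs.le (mul_nonneg hQ.le (by linarith))
    have key : s * ((A + Q) * (-(s * DB) - DxB)) -
        c * ((-(s * DB) - DxB) - 2 * (-(s * DB) + DxB)) = s * (Q * (s * T - cGD)) := by
      linear_combination (-(s ^ 2)) * e1 + s * e2 + (-(c * DxB)) * hs2
    linarith
  have h3b : c * (2 * (-(s * DB) - DxB) - (-(s * DB) + DxB)) ≤
      s * ((A + Q) * (-(s * DB) + DxB)) := by
    have hf : 0 ≤ s * (Q * (s * T + cGD)) :=
      mul_nonneg hs.le (mul_nonneg hQ.le (by linarith))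
    have key : s * ((A + Q) * (-(s * DB) + DxB)) -
        c * (2 * (-(s * DB) - DxB) - (-(s * DB) + DxB)) = s * (Q * (s * T + cGD)) := by
      linear_combination (-(s ^ 2)) * e1 - s * e2 + (-(c * DxB)) * hs2
    linarith
  have hcase' : s * (A * (-(s * DB) - DxB)) <
        c * ((-(s * DB) - DxB) - 2 * (-(s * DB) + DxB)) ∨
      s * (A * (-(s * DB) + DxB)) <
        c * (2 * (-(s * DB) - DxB) - (-(s * DB) + DxB)) := by
    rcases hcase with h4 | h4
    · left
      have hf : 0 < s * (Q * (cVD - s * t)) := mul_pos hs (mul_pos hQ (by linarith))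
      have key : c * ((-(s * DB) - DxB) - 2 * (-(s * DB) + DxB)) -
          s * (A * (-(s * DB) - DxB)) = s * (Q * (cVD - s * t)) := by
        linear_combination (-s) * e4 + (s ^ 2) * e3 + (c * DxB) * hs2
      linarith
    · right
      have hf : 0 < s * (Q * (-cVD - s * t)) := mul_pos hs (mul_pos hQ (by linarith))
      have key : c * (2 * (-(s * DB) - DxB) - (-(s * DB) + DxB)) -
          s * (A * (-(s * DB) + DxB)) = s * (Q * (-cVD - s * t)) := by
        linear_combination s * e4 + (s ^ 2) * e3 + (c * DxB) * hs2
      linarith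
  obtain ⟨hX, hY⟩ := claim23_linsolve s A Q c (-(s * DB) + DxB) (-(s * DB) - DxB)
    hs hQ hA h3a h3b hcase'
  constructor <;> linarith

section Aux3

local notation "E2" => EuclideanSpace ℝ (Fin 2)

lemma claim23_angle_le_iff {a b : E2} (ha : a ≠ 0) (hb : b ≠ 0) :
    InnerProductGeometry.angle a b ≤ π / 3 ↔ ‖a‖ * ‖b‖ ≤ 2 * (inner ℝ a b : ℝ) := by
  have hna : 0 < ‖a‖ := norm_pos_iff.mpr ha
  have hnb : 0 < ‖b‖ := norm_pos_iff.mpr hb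
  have hN : 0 < ‖a‖ * ‖b‖ := mul_pos hna hnb
  have hcos : Real.cos (InnerProductGeometry.angle a b) = (inner ℝ a b : ℝ) / (‖a‖ * ‖b‖) :=
    InnerProductGeometry.cos_angle a b
  constructor
  · intro h
    have h1 : Real.cos (π / 3) ≤ Real.cos (InnerProductGeometry.angle a b) :=
      Real.cos_le_cos_of_nonneg_of_le_pi (InnerProductGeometry.angle_nonneg a b)
        (by linarith [Real.pi_pos]) h
    rw [Real.cos_pi_div_three, hcos] at h1
    rw [le_div_iff₀ hN] at h1
    linarith
  · intro h
    by_contra hlt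
    push_neg at hlt
    have h1 : Real.cos (InnerProductGeometry.angle a b) < Real.cos (π / 3) :=
      Real.cos_lt_cos_of_nonneg_of_le_pi (by positivity) (InnerProductGeometry.angle_le_pi a b) hlt
    rw [Real.cos_pi_div_three, hcos, div_lt_iff₀ hN] at h1
    linarith

lemma claim23_side_coords {a b : E2} (h : ‖a‖ * ‖b‖ ≤ 2 * (inner ℝ a b : ℝ)) :
    0 ≤ a 0 * b 0 + a 1 * b 1 ∧
      (a 0 * b 1 - a 1 * b 0) ^ 2 ≤ 3 * (a 0 * b 0 + a 1 * b 1) ^ 2 := by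
  have hd := claim23_inner2 a b
  have hN : 0 ≤ ‖a‖ * ‖b‖ := by positivity
  rw [hd] at h
  have hA : 0 ≤ a 0 * b 0 + a 1 * b 1 := by linarith
  have hsq : (‖a‖ * ‖b‖) ^ 2 = (a 0 ^ 2 + a 1 ^ 2) * (b 0 ^ 2 + b 1 ^ 2) := by
    rw [mul_pow, claim23_normsq, claim23_normsq]
  refine ⟨hA, ?_⟩
  nlinarith [mul_self_le_mul_self hN h, hsq]

lemma claim23_coords_side {a b : E2} (hA : 0 ≤ a 0 * b 0 + a 1 * b 1)
    (hc : (a 0 * b 1 - a 1 * b 0) ^ 2 ≤ 3 * (a 0 * b 0 + a 1 * b 1) ^ 2) :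
    ‖a‖ * ‖b‖ ≤ 2 * (inner ℝ a b : ℝ) := by
  have hd := claim23_inner2 a b
  have hN : 0 ≤ ‖a‖ * ‖b‖ := by positivity
  have hsq : (‖a‖ * ‖b‖) ^ 2 = (a 0 ^ 2 + a 1 ^ 2) * (b 0 ^ 2 + b 1 ^ 2) := by
    rw [mul_pow, claim23_normsq, claim23_normsq]
  rw [hd]
  nlinarith [hN, hsq, hA, hc]

end Aux3
open Real

lemma claim23_final (s Zd Zc : ℝ) (hs : 0 < s) (hs2 : s ^ 2 = 3)
    (h1 : Zc ≤ s * Zd) (h2 : -(s * Zd) ≤ Zc) : 0 ≤ Zd ∧ Zc ^ 2 ≤ 3 * Zd ^ 2 := by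
  have hZd : 0 ≤ Zd := by nlinarith
  exact ⟨hZd, by nlinarith [mul_nonneg hs.le hZd]⟩

set_option maxHeartbeats 1000000 in
theorem claim23 (u v x y : EuclideanSpace ℝ (Fin 2))
    (huv : u ≠ v) (hxy : x ≠ y)
    (hxv : x ≠ v) (hx : InnerProductGeometry.angle (x - v) (v - u) ≤ π / 3)
    (hy1 : InnerProductGeometry.angle (y - u) (u - v) > π / 3)
    (hy2 : InnerProductGeometry.angle (y - v) (v - u) > π / 3)
    (hux : u ≠ x) (hu : InnerProductGeometry.angle (u - x) (x - y) ≤ π / 3) :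
    v ≠ x ∧ InnerProductGeometry.angle (v - x) (x - y) ≤ π / 3 := by
  refine ⟨hxv.symm, ?_⟩
  by_contra hng
  have hPne : x - v ≠ 0 := sub_ne_zero.mpr hxv
  have hBne : v - u ≠ 0 := sub_ne_zero.mpr (Ne.symm huv)
  have hDne : x - y ≠ 0 := sub_ne_zero.mpr hxy
  have hGne : u - x ≠ 0 := sub_ne_zero.mpr hux
  have hVXne : v - x ≠ 0 := sub_ne_zero.mpr (Ne.symm hxv)
  have hsub : ∀ (a b : EuclideanSpace ℝ (Fin 2)) (i : Fin 2), (a - b) i = a i - b i := by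
    intro a b i; simp
  have hs : (0 : ℝ) < Real.sqrt 3 := Real.sqrt_pos.mpr (by norm_num)
  have hs2 : (Real.sqrt 3) ^ 2 = 3 := Real.sq_sqrt (by norm_num)
  -- coordinate versions of hx and hu
  have hx1 := claim23_side_coords ((claim23_angle_le_iff hPne hBne).1 hx)
  have hu1 := claim23_side_coords ((claim23_angle_le_iff hGne hDne).1 hu)
  simp only [hsub] at hx1 hu1
  -- positivity facts
  have hQ : 0 < (v 0 - u 0) ^ 2 + (v 1 - u 1) ^ 2 := by
    have := claim23_pos _ hBne
    simp only [hsub] at this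
    exact this
  have hPsq : 0 < (x 0 - v 0) ^ 2 + (x 1 - v 1) ^ 2 := by
    have := claim23_pos _ hPne
    simp only [hsub] at this
    exact this
  -- the case y = v is impossible
  rcases eq_or_ne y v with hyv | hyv
  · subst hyv
    linarith [hu1.1, hx1.1, hPsq]
  -- main case
  have hZne : y - v ≠ 0 := sub_ne_zero.mpr hyv
  -- |cross| ≤ √3 * dot forms
  obtain ⟨hc1, hc2⟩ := claim23_abs_le (Real.sqrt 3) _ _ hs hs2 hx1.1 hx1.2
  obtain ⟨hT1, hT2⟩ := claim23_abs_le (Real.sqrt 3) _ _ hs hs2 hu1.1 hu1.2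
  -- negated goal in coordinates
  have hng1 : 2 * ((v 0 - x 0) * (x 0 - y 0) + (v 1 - x 1) * (x 1 - y 1)) <
      ‖v - x‖ * ‖x - y‖ := by
    have h := mt (claim23_angle_le_iff hVXne hDne).2 hng
    push_neg at h
    rw [claim23_inner2] at h
    simp only [hsub] at h
    linarith
  have hNsq : (‖v - x‖ * ‖x - y‖) ^ 2 =
      ((v 0 - x 0) * (x 0 - y 0) + (v 1 - x 1) * (x 1 - y 1)) ^ 2 +
      ((v 0 - x 0) * (x 1 - y 1) - (v 1 - x 1) * (x 0 - y 0)) ^ 2 := by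
    rw [mul_pow, claim23_normsq, claim23_normsq]
    simp only [hsub]
    ring
  have hcase := claim23_case (Real.sqrt 3)
    ((v 0 - x 0) * (x 0 - y 0) + (v 1 - x 1) * (x 1 - y 1))
    ((v 0 - x 0) * (x 1 - y 1) - (v 1 - x 1) * (x 0 - y 0))
    (‖v - x‖ * ‖x - y‖) hs hs2 hng1 hNsq
  -- apply the crux lemma
  obtain ⟨hZ1, hZ2⟩ := claim23_crux (Real.sqrt 3)
    ((x 0 - v 0) * (v 0 - u 0) + (x 1 - v 1) * (v 1 - u 1))
    (-((x 0 - v 0) * (v 1 - u 1) - (x 1 - v 1) * (v 0 - u 0)))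
    ((v 0 - u 0) ^ 2 + (v 1 - u 1) ^ 2)
    ((x 0 - y 0) * (v 0 - u 0) + (x 1 - y 1) * (v 1 - u 1))
    ((x 0 - y 0) * (v 1 - u 1) - (x 1 - y 1) * (v 0 - u 0))
    ((u 0 - x 0) * (x 0 - y 0) + (u 1 - x 1) * (x 1 - y 1))
    ((u 0 - x 0) * (x 1 - y 1) - (u 1 - x 1) * (x 0 - y 0))
    ((v 0 - x 0) * (x 0 - y 0) + (v 1 - x 1) * (x 1 - y 1))
    ((v 0 - x 0) * (x 1 - y 1) - (v 1 - x 1) * (x 0 - y 0))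
    hs hs2 hQ hx1.1 (by linarith [hc2]) (by linarith [hc1]) hT1 hT2
    (by ring) (by ring) (by ring) (by ring) hcase
  -- now show y is in the side cone of v, contradicting hy2
  have hZc1 : (y 0 - v 0) * (v 1 - u 1) - (y 1 - v 1) * (v 0 - u 0) ≤
      Real.sqrt 3 * ((y 0 - v 0) * (v 0 - u 0) + (y 1 - v 1) * (v 1 - u 1)) := by
    linarith [hc2, hZ2]
  have hZc2 : -(Real.sqrt 3 * ((y 0 - v 0) * (v 0 - u 0) + (y 1 - v 1) * (v 1 - u 1))) ≤
      (y 0 - v 0) * (v 1 - u 1) - (y 1 - v 1) * (v 0 - u 0) := by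
    linarith [hc1, hZ1]
  obtain ⟨hZA, hZsq⟩ := claim23_final (Real.sqrt 3)
    ((y 0 - v 0) * (v 0 - u 0) + (y 1 - v 1) * (v 1 - u 1))
    ((y 0 - v 0) * (v 1 - u 1) - (y 1 - v 1) * (v 0 - u 0)) hs hs2 hZc1 hZc2
  have hfin : ‖y - v‖ * ‖v - u‖ ≤ 2 * (inner ℝ (y - v) (v - u) : ℝ) := by
    apply claim23_coords_side <;> simp only [hsub]
    · exact hZA
    · exact hZsq
  have hang : InnerProductGeometry.angle (y - v) (v - u) ≤ π / 3 :=
    (claim23_angle_le_iff hZne hBne).2 hfin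
  linarith [hy2]
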